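/- Let G = (V,E) be a finite acyclic network in which every local measure satisfies μ_i(∅) > 0, let t > 0, and let x(t) be the unique solution of the cavity equation x = tΓ_G(x). Then for every vertex i ∈ V and every subset I ⊆ E_i, the marginal law of 𝓕 ∩ E_i under the Gibbs–Boltzmann law satisfies P^t_G(𝓕 ∩ E_i = I) = μ_i(I) ∏_{j : ij∈I} x_{j→i}(t) / (Σ_{J⊆E_i} μ_i(J) ∏_{j : ij∈J} x_{j→i}(t)); i.e. the marginal is obtained from μ_i by imposing the external field (x_{j→i}(t) : j ∈ ∂i). -/

import Mathlib

open Finset Filter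
open scoped Classical ENNReal

section LocalDefs

variable {V : Type*} [DecidableEq V]

/-- Generating polynomial `Z(w) = Σ_{S ⊆ A} ν(S) ∏_{k∈S} w_k` of a measure `ν`
on the subsets of the ground set `A`. -/
noncomputable def lZ (A : Finset V) (ν : Finset V → ℝ) (w : V → ℝ) : ℝ :=
  ∑ S ∈ A.powerset, ν S * ∏ k ∈ S, w k

/-- Gibbs--Boltzmann probability of the event `p` under external field `w`. -/
noncomputable def lProb (A : Finset V) (ν : Finset V → ℝ) (w : V → ℝ)
    (p : Finset V → Prop) : ℝ :=
  (∑ S ∈ A.powerset.filter p, ν S * ∏ k ∈ S, w k) / lZ A ν w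

/-- The energy `U_ν(w)`, i.e. the expected cardinality of the random subset. -/
noncomputable def lEnergy (A : Finset V) (ν : Finset V → ℝ) (w : V → ℝ) : ℝ :=
  (∑ S ∈ A.powerset, (S.card : ℝ) * ν S * ∏ k ∈ S, w k) / lZ A ν w

/-- `E^w_ν[|𝓕|·1_{e∈𝓕}]`. -/
noncomputable def lEnergyIn (A : Finset V) (ν : Finset V → ℝ) (e : V) (w : V → ℝ) : ℝ :=
  (∑ S ∈ A.powerset.filter (fun S => e ∈ S), (S.card : ℝ) * ν S * ∏ k ∈ S, w k) / lZ A ν w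

/-- The cavity ratio `Γ^e_ν(w') = Z^{/e}(w') / Z^{∖e}(w')`; it only depends on the
coordinates of `w` different from `e`. -/
noncomputable def lGamma (A : Finset V) (ν : Finset V → ℝ) (e : V) (w : V → ℝ) : ℝ :=
  (∑ S ∈ (A.erase e).powerset, ν (insert e S) * ∏ k ∈ S, w k) /
  (∑ S ∈ (A.erase e).powerset, ν S * ∏ k ∈ S, w k)

/-- Rayleigh property: pairwise negative correlation under every positive external field. -/
def lRayleigh (A : Finset V) (ν : Finset V → ℝ) : Prop :=
  ∀ w : V → ℝ, (∀ k ∈ A, 0 < w k) → ∀ e ∈ A, ∀ f ∈ A, e ≠ f →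
    lProb A ν w (fun S => e ∈ S ∧ f ∈ S) ≤
      lProb A ν w (fun S => e ∈ S) * lProb A ν w (fun S => f ∈ S)

/-- Size-increasing property: every ground element positively influences the total size. -/
def lSizeInc (A : Finset V) (ν : Finset V → ℝ) : Prop :=
  ∀ w : V → ℝ, (∀ k ∈ A, 0 < w k) → ∀ e ∈ A,
    lEnergy A ν w * lProb A ν w (fun S => e ∈ S) < lEnergyIn A ν e w

/-- Cavity-monotone: nonnegative, `ν(∅) > 0`, Rayleigh and size-increasing. -/
def lCavityMonotone (A : Finset V) (ν : Finset V → ℝ) : Prop :=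
  (∀ S ∈ A.powerset, 0 ≤ ν S) ∧ 0 < ν ∅ ∧ lRayleigh A ν ∧ lSizeInc A ν

end LocalDefs

section NetworkDefs

variable {V : Type*} [DecidableEq V]

/-- The cavity operator: `(Γ_G x)_{i→j}` is the cavity ratio of the local measure `μ i`
at the edge `ij`, with external field `(x_{k→i} : k ∈ ∂i ∖ {j})`.  Local measures are
encoded as functions of the set of neighbours selected. -/
noncomputable def cavOp (G : SimpleGraph V) [G.LocallyFinite]
    (μ : V → Finset V → ℝ) (x : V → V → ℝ) (i j : V) : ℝ :=
  (∑ S ∈ ((G.neighborFinset i).erase j).powerset, μ i (insert j S) * ∏ k ∈ S, x k i) /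
  (∑ S ∈ ((G.neighborFinset i).erase j).powerset, μ i S * ∏ k ∈ S, x k i)

/-- One step of the cavity iteration at activity `t` : `x ↦ t Γ_G(x)`. -/
noncomputable def cavStep (G : SimpleGraph V) [G.LocallyFinite]
    (μ : V → Finset V → ℝ) (t : ℝ) (x : V → V → ℝ) : V → V → ℝ :=
  fun i j => t * cavOp G μ x i j

/-- The neighbours `k` of `i` such that the edge `ik` belongs to the spanning subgraph `F`;
this encodes `F ∩ E_i` as a set of neighbours. -/
noncomputable def nbrsIn (G : SimpleGraph V) [G.LocallyFinite]
    (F : Finset (Sym2 V)) (i : V) : Finset V :=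
  (G.neighborFinset i).filter (fun k => s(i, k) ∈ F)

variable [Fintype V]

/-- Global measure `μ(F) = ∏_i μ_i(F ∩ E_i)` of a spanning subgraph `F`. -/
noncomputable def gWeight (G : SimpleGraph V) [DecidableRel G.Adj]
    (μ : V → Finset V → ℝ) (F : Finset (Sym2 V)) : ℝ :=
  ∏ i : V, μ i (nbrsIn G F i)

/-- Partition function `Z(G;t) = Σ_{F ⊆ E} μ(F) t^{|F|}`. -/
noncomputable def ZG (G : SimpleGraph V) [DecidableRel G.Adj]
    (μ : V → Finset V → ℝ) (t : ℝ) : ℝ :=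
  ∑ F ∈ G.edgeFinset.powerset, gWeight G μ F * t ^ F.card

/-- Gibbs--Boltzmann probability of the event `p` at activity `t`. -/
noncomputable def gProb (G : SimpleGraph V) [DecidableRel G.Adj]
    (μ : V → Finset V → ℝ) (t : ℝ) (p : Finset (Sym2 V) → Prop) : ℝ :=
  (∑ F ∈ G.edgeFinset.powerset.filter p, gWeight G μ F * t ^ F.card) / ZG G μ t

/-- Energy `U(G;t)`, the expected size of the random spanning subgraph. -/
noncomputable def UG (G : SimpleGraph V) [DecidableRel G.Adj]
    (μ : V → Finset V → ℝ) (t : ℝ) : ℝ :=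
  (∑ F ∈ G.edgeFinset.powerset, (F.card : ℝ) * gWeight G μ F * t ^ F.card) / ZG G μ t

/-- `M(G)`, the maximum size of a spanning subgraph with positive weight. -/
noncomputable def MG (G : SimpleGraph V) [DecidableRel G.Adj]
    (μ : V → Finset V → ℝ) : ℕ :=
  (G.edgeFinset.powerset.filter (fun F => 0 < gWeight G μ F)).sup Finset.card

end NetworkDefs

section Aux

open SimpleGraph

lemma aux_endpoint {V : Type*} [Fintype V] [DecidableEq V] {G : SimpleGraph V}
    [DecidableRel G.Adj] (hac : G.IsAcyclic) {u v : V} (w : G.Walk u v)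
    (hw : w.IsPath) (hlen : 1 ≤ w.length)
    (hmax : ∀ (a b : V) (w' : G.Walk a b), w'.IsPath → w'.length ≤ w.length) :
    G.neighborFinset u = {w.getVert 1} := by
  have hnil : ¬ w.Nil := by
    rw [SimpleGraph.Walk.nil_iff_length_eq]; omega
  ext z
  simp only [SimpleGraph.mem_neighborFinset, Finset.mem_singleton]
  constructor
  · intro hz
    by_cases hzs : z ∈ w.support
    · have hP : (w.takeUntil z hzs).IsPath := hw.takeUntil hzs
      have huniq := hac.path_unique ⟨w.takeUntil z hzs, hP⟩ (SimpleGraph.Path.singleton hz)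
      have hTU : w.takeUntil z hzs = SimpleGraph.Walk.cons hz SimpleGraph.Walk.nil := by
        simpa [SimpleGraph.Path.singleton] using congrArg Subtype.val huniq
      have hspec := w.take_spec hzs
      rw [hTU] at hspec
      have : w.getVert 1 = z := by
        rw [← hspec]
        simp
      exact this.symm
    · have hext : (SimpleGraph.Walk.cons hz.symm w).IsPath := hw.cons hzs
      have := hmax _ _ _ hext
      simp [SimpleGraph.Walk.length_cons] at this
  · rintro rfl; exact w.adj_snd hnil

lemma aux_exists_leaf {V : Type*} [Fintype V] [DecidableEq V] (G : SimpleGraph V)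
    [DecidableRel G.Adj] (hac : G.IsAcyclic) (hne : G.edgeFinset.Nonempty) (i : V) :
    ∃ ℓ q : V, ℓ ≠ i ∧ G.neighborFinset ℓ = {q} := by
  classical
  obtain ⟨e, he⟩ := hne
  induction e using Sym2.ind with
  | _ a b =>
  rw [SimpleGraph.mem_edgeFinset, SimpleGraph.mem_edgeSet] at he
  set P : ℕ → Prop := fun m => ∃ (c d : V) (w : G.Walk c d), w.IsPath ∧ w.length = m with hPdef
  have hsing : (SimpleGraph.Walk.cons he (SimpleGraph.Walk.nil)).IsPath :=
    (SimpleGraph.Path.singleton he).2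
  have hP1 : P 1 := ⟨a, b, _, hsing, by simp⟩
  have hbound : ∀ m, P m → m ≤ Fintype.card V := by
    rintro m ⟨c, d, w, hw, rfl⟩
    exact (hw.length_lt).le
  set n := Nat.findGreatest P (Fintype.card V) with hn
  have hn1 : 1 ≤ n := Nat.le_findGreatest (hbound 1 hP1) hP1
  have hPn : P n := Nat.findGreatest_spec (hbound 1 hP1) hP1
  obtain ⟨c, d, w, hw, hwl⟩ := hPn
  have hmax : ∀ (a b : V) (w' : G.Walk a b), w'.IsPath → w'.length ≤ w.length := by
    intro a b w' hw'
    by_contra hlt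
    push_neg at hlt
    have hP' : P w'.length := ⟨a, b, w', hw', rfl⟩
    have h1 : Nat.findGreatest P (Fintype.card V) < w'.length := by omega
    exact Nat.findGreatest_is_greatest h1 (hbound _ hP') hP'
  have hlen : 1 ≤ w.length := hwl ▸ hn1
  have hcd : c ≠ d := by
    rintro rfl
    have := SimpleGraph.Path.loop_eq ⟨w, hw⟩
    have hw0 : w = SimpleGraph.Walk.nil := by
      simpa [SimpleGraph.Path.nil] using congrArg Subtype.val this
    rw [hw0] at hwl; simp at hwl; omega
  have hleaf1 : G.neighborFinset c = {w.getVert 1} := aux_endpoint hac w hw hlen hmax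
  have hleaf2 : G.neighborFinset d = {w.reverse.getVert 1} := by
    refine aux_endpoint hac w.reverse hw.reverse (by simpa using hlen) ?_
    intro a b w' hw'
    simpa using hmax a b w' hw'
  by_cases hci : c = i
  · exact ⟨d, _, by rintro rfl; exact hcd hci, hleaf2⟩
  · exact ⟨c, _, hci, hleaf1⟩

lemma aux_split_sum {V : Type*} [DecidableEq V] (A : Finset V) {ℓ : V} (hA : ℓ ∉ A)
    (ν : Finset V → ℝ) (y : V → ℝ) (a b : ℝ) (hab : a * y ℓ = b) :
    a * ∑ S ∈ (insert ℓ A).powerset, ν S * ∏ k ∈ S, y k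
      = ∑ S ∈ A.powerset, (a * ν S + b * ν (insert ℓ S)) * ∏ k ∈ S, y k := by
  rw [Finset.sum_powerset_insert hA, mul_add, Finset.mul_sum, Finset.mul_sum,
    ← Finset.sum_add_distrib]
  refine Finset.sum_congr rfl fun S hS => ?_
  have hℓS : ℓ ∉ S := fun h => hA (Finset.mem_powerset.mp hS h)
  rw [Finset.prod_insert hℓS, ← hab]
  ring

end Aux
section Main

open SimpleGraph Finset

lemma aux_edgeless {V : Type*} [Fintype V] [DecidableEq V] (G : SimpleGraph V)
    [DecidableRel G.Adj] (μ : V → Finset V → ℝ) (h0 : ∀ i : V, 0 < μ i ∅) (t : ℝ)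
    (x : V → V → ℝ) (hE : G.edgeFinset = ∅) (i : V) :
    ∃ c : ℝ, 0 < c ∧ ∀ I ∈ (G.neighborFinset i).powerset,
      (∑ F ∈ G.edgeFinset.powerset.filter (fun F => nbrsIn G F i = I),
          gWeight G μ F * t ^ F.card) = c * (μ i I * ∏ j ∈ I, x j i) := by
  have hnb : ∀ k : V, G.neighborFinset k = ∅ := by
    intro k
    ext z
    simp only [SimpleGraph.mem_neighborFinset, Finset.notMem_empty, iff_false]
    intro hadj
    have : s(k, z) ∈ G.edgeFinset := by rwa [SimpleGraph.mem_edgeFinset, SimpleGraph.mem_edgeSet]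
    rw [hE] at this
    exact absurd this (Finset.notMem_empty _)
  refine ⟨∏ k ∈ Finset.univ.erase i, μ k ∅, Finset.prod_pos (fun k _ => h0 k), ?_⟩
  intro I hI
  rw [Finset.mem_powerset, hnb i, Finset.subset_empty] at hI
  subst hI
  have hnbr : ∀ k, nbrsIn G (∅ : Finset (Sym2 V)) k = ∅ := by
    intro k; simp [nbrsIn]
  have hfil : (G.edgeFinset.powerset.filter
      (fun F => nbrsIn G F i = (∅ : Finset V))) = {∅} := by
    rw [hE]
    rw [Finset.powerset_empty]
    rw [Finset.filter_singleton, if_pos (hnbr i)]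
  rw [hfil, Finset.sum_singleton]
  rw [gWeight]
  simp only [hnbr, Finset.card_empty, pow_zero, mul_one, Finset.prod_empty]
  rw [← Finset.mul_prod_erase Finset.univ (fun k => μ k ∅) (Finset.mem_univ i)]
  ring

lemma aux_main {V : Type*} [Fintype V] [DecidableEq V] {t : ℝ} (ht : 0 < t) :
    ∀ n : ℕ, ∀ (G : SimpleGraph V) [DecidableRel G.Adj] (μ : V → Finset V → ℝ),
      G.IsAcyclic →
      (∀ i : V, ∀ S ∈ (G.neighborFinset i).powerset, 0 ≤ μ i S) →
      (∀ i : V, 0 < μ i ∅) →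
      ∀ x : V → V → ℝ,
      (∀ i j, G.Adj i j → x i j = t * cavOp G μ x i j) →
      ∀ i : V, G.edgeFinset.card ≤ n →
      ∃ c : ℝ, 0 < c ∧ ∀ I ∈ (G.neighborFinset i).powerset,
        (∑ F ∈ G.edgeFinset.powerset.filter (fun F => nbrsIn G F i = I),
            gWeight G μ F * t ^ F.card) = c * (μ i I * ∏ j ∈ I, x j i) := by
  intro n
  induction n with
  | zero =>
    intro G instG μ hac hnn h0 x hx i hcard
    exact aux_edgeless G μ h0 t x (Finset.card_eq_zero.mp (Nat.le_zero.mp hcard)) i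
  | succ n IH =>
    intro G instG μ hac hnn h0 x hx i hcard
    by_cases hE0 : G.edgeFinset = ∅
    · exact aux_edgeless G μ h0 t x hE0 i
    have hne : G.edgeFinset.Nonempty := Finset.nonempty_of_ne_empty hE0
    obtain ⟨ℓ, p, hℓi, hlp⟩ := aux_exists_leaf G hac hne i
    have hadj : G.Adj ℓ p := by
      rw [← SimpleGraph.mem_neighborFinset, hlp]; exact Finset.mem_singleton_self p
    have hℓp : ℓ ≠ p := hadj.ne
    have hpℓ : p ≠ ℓ := hadj.ne'
    set e : Sym2 V := s(ℓ, p) with hedef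
    have he : e ∈ G.edgeFinset := by
      rw [SimpleGraph.mem_edgeFinset]; exact hadj
    set G' := G.deleteEdges {e} with hG'
    have hle' : G' ≤ G := SimpleGraph.deleteEdges_le _
    have hac' : G'.IsAcyclic := fun v c hc => hac (c.mapLe hle') (hc.mapLe hle')
    have hE' : G'.edgeFinset = G.edgeFinset.erase e := by
      ext f
      simp only [Finset.mem_erase, SimpleGraph.mem_edgeFinset, hG',
        SimpleGraph.edgeSet_deleteEdges, Set.mem_diff, Set.mem_singleton_iff]
      tauto
    have hcard' : G'.edgeFinset.card ≤ n := by
      rw [hE', Finset.card_erase_of_mem he]; omega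
    have heE' : e ∉ G'.edgeFinset := by rw [hE']; exact Finset.notMem_erase _ _
    have hEins : G.edgeFinset = insert e G'.edgeFinset := by
      rw [hE', Finset.insert_erase he]
    -- neighbour sets
    have hNℓ' : G'.neighborFinset ℓ = ∅ := by
      ext z
      simp only [SimpleGraph.mem_neighborFinset, Finset.notMem_empty, iff_false, hG',
        SimpleGraph.deleteEdges_adj, Set.mem_singleton_iff]
      rintro ⟨hadjz, hnz⟩
      have hmem : z ∈ G.neighborFinset ℓ := by rwa [SimpleGraph.mem_neighborFinset]
      rw [hlp, Finset.mem_singleton] at hmem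
      subst hmem; exact hnz rfl
    have hNp' : G'.neighborFinset p = (G.neighborFinset p).erase ℓ := by
      ext z
      simp only [SimpleGraph.mem_neighborFinset, Finset.mem_erase, hG',
        SimpleGraph.deleteEdges_adj, Set.mem_singleton_iff]
      constructor
      · rintro ⟨h1, h2⟩
        exact ⟨fun hzℓ => h2 (by rw [hzℓ, hedef, Sym2.eq_swap]), h1⟩
      · rintro ⟨h1, h2⟩
        refine ⟨h2, fun hc => h1 ?_⟩
        rw [hedef, Sym2.eq_iff] at hc
        rcases hc with ⟨h3, _⟩ | ⟨_, h4⟩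
        · exact absurd h3 hpℓ
        · exact h4
    have hNk' : ∀ k, k ≠ ℓ → k ≠ p → G'.neighborFinset k = G.neighborFinset k := by
      intro k hk1 hk2
      ext z
      simp only [SimpleGraph.mem_neighborFinset, hG', SimpleGraph.deleteEdges_adj,
        Set.mem_singleton_iff]
      refine ⟨fun h => h.1, fun h => ⟨h, fun hc => ?_⟩⟩
      rw [hedef, Sym2.eq_iff] at hc
      rcases hc with ⟨h3, _⟩ | ⟨h3, _⟩
      · exact hk1 h3
      · exact hk2 h3
    -- the modified local measures
    set μ' : V → Finset V → ℝ := fun k =>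
      if k = ℓ then (fun _ => (1 : ℝ))
      else if k = p then (fun S => μ ℓ ∅ * μ p S + t * μ ℓ {p} * μ p (insert ℓ S))
      else μ k with hμ'
    have hμ'ℓ : ∀ S, μ' ℓ S = 1 := fun S => by simp [hμ']
    have hμ'p : ∀ S, μ' p S = μ ℓ ∅ * μ p S + t * μ ℓ {p} * μ p (insert ℓ S) := fun S => by
      simp [hμ', hpℓ]
    have hμ'k : ∀ k, k ≠ ℓ → k ≠ p → μ' k = μ k := fun k h1 h2 => by simp [hμ', h1, h2]
    have h0ℓ : (0 : ℝ) < μ ℓ ∅ := h0 ℓ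
    have hμℓp : 0 ≤ μ ℓ {p} := hnn ℓ {p} (by rw [Finset.mem_powerset, hlp])
    have hlmem : ℓ ∈ G.neighborFinset p := by
      rw [SimpleGraph.mem_neighborFinset]; exact hadj.symm
    have hxℓp : μ ℓ ∅ * x ℓ p = t * μ ℓ {p} := by
      have h1 := hx ℓ p hadj
      have h2 : (G.neighborFinset ℓ).erase p = ∅ := by rw [hlp]; simp
      rw [cavOp, h2] at h1
      simp only [Finset.powerset_empty, Finset.sum_singleton, Finset.prod_empty, mul_one] at h1
      have hins : insert p (∅ : Finset V) = {p} := rfl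
      rw [h1, hins]
      field_simp
    have hnn' : ∀ k : V, ∀ S ∈ (G'.neighborFinset k).powerset, 0 ≤ μ' k S := by
      intro k S hS
      by_cases hk1 : k = ℓ
      · subst hk1; rw [hμ'ℓ]; norm_num
      by_cases hk2 : k = p
      · rw [hk2] at hS ⊢
        rw [hμ'p]
        rw [Finset.mem_powerset, hNp'] at hS
        have hS1 : S ⊆ G.neighborFinset p := hS.trans (Finset.erase_subset _ _)
        have hS2 : insert ℓ S ⊆ G.neighborFinset p := Finset.insert_subset hlmem hS1
        have ha1 := hnn p S (Finset.mem_powerset.mpr hS1)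
        have ha2 := hnn p _ (Finset.mem_powerset.mpr hS2)
        exact add_nonneg (mul_nonneg h0ℓ.le ha1)
          (mul_nonneg (mul_nonneg ht.le hμℓp) ha2)
      · rw [hμ'k k hk1 hk2]
        exact hnn k S (by rwa [Finset.mem_powerset, ← hNk' k hk1 hk2, ← Finset.mem_powerset])
    have h0' : ∀ k : V, 0 < μ' k ∅ := by
      intro k
      by_cases hk1 : k = ℓ
      · subst hk1; rw [hμ'ℓ]; norm_num
      by_cases hk2 : k = p
      · rw [hk2, hμ'p]
        have h2 : 0 ≤ μ p (insert ℓ ∅) := by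
          refine hnn p _ (Finset.mem_powerset.mpr ?_)
          simp [hlmem]
        have h3 := mul_pos h0ℓ (h0 p)
        nlinarith [mul_nonneg (mul_nonneg ht.le hμℓp) h2]
      · rw [hμ'k k hk1 hk2]; exact h0 k
    -- transfer of the cavity equations
    have hcav : ∀ a b : V, G'.Adj a b → x a b = t * cavOp G' μ' x a b := by
      intro a b hab
      have hab' := hab
      rw [hG', SimpleGraph.deleteEdges_adj, Set.mem_singleton_iff] at hab'
      obtain ⟨habG, hnab⟩ := hab'
      by_cases ha1 : a = ℓ
      · exfalso
        have : b ∈ G'.neighborFinset ℓ := by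
          rw [SimpleGraph.mem_neighborFinset, ← ha1]; exact hab
        rw [hNℓ'] at this
        exact absurd this (Finset.notMem_empty _)
      by_cases ha2 : a = p
      · rw [ha2] at habG hnab ⊢
        have hbℓ : b ≠ ℓ := by
          rintro rfl
          exact hnab (by rw [hedef, Sym2.eq_swap])
        rw [hx p b habG]
        congr 1
        have hℓin : ℓ ∈ (G.neighborFinset p).erase b := Finset.mem_erase.mpr ⟨Ne.symm hbℓ, hlmem⟩
        have hnotmem : ℓ ∉ (G'.neighborFinset p).erase b := by
          intro h
          have := Finset.mem_of_mem_erase h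
          rw [hNp'] at this
          exact Finset.notMem_erase _ _ this
        have hset : (G.neighborFinset p).erase b = insert ℓ ((G'.neighborFinset p).erase b) := by
          rw [hNp', Finset.erase_right_comm, Finset.insert_erase hℓin]
        have hA := aux_split_sum ((G'.neighborFinset p).erase b) hnotmem
          (fun S => μ p (insert b S)) (fun k => x k p) (μ ℓ ∅) (t * μ ℓ {p}) hxℓp
        have hB := aux_split_sum ((G'.neighborFinset p).erase b) hnotmem
          (fun S => μ p S) (fun k => x k p) (μ ℓ ∅) (t * μ ℓ {p}) hxℓp
        try simp only [] at hA hB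
        rw [cavOp, cavOp, hset, ← mul_div_mul_left
          (∑ S ∈ (insert ℓ ((G'.neighborFinset p).erase b)).powerset,
            μ p (insert b S) * ∏ k ∈ S, x k p)
          (∑ S ∈ (insert ℓ ((G'.neighborFinset p).erase b)).powerset,
            μ p S * ∏ k ∈ S, x k p) (ne_of_gt h0ℓ), hA, hB]
        congr 1
        · refine Finset.sum_congr rfl fun S hS => ?_
          rw [hμ'p, Finset.insert_comm]
        · refine Finset.sum_congr rfl fun S hS => ?_
          rw [hμ'p]
      · rw [hx a b habG]
        congr 1
        rw [cavOp, cavOp, hNk' a ha1 ha2, hμ'k a ha1 ha2]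
    -- nbrsIn lemmas
    have h12a : ∀ F' : Finset (Sym2 V), F' ⊆ G'.edgeFinset → ∀ k,
        nbrsIn G F' k = nbrsIn G' F' k := by
      intro F' hF' k
      unfold nbrsIn
      ext z
      simp only [Finset.mem_filter, SimpleGraph.mem_neighborFinset]
      constructor
      · rintro ⟨h1, h2⟩
        have h3 : s(k, z) ∈ G'.edgeFinset := hF' h2
        rw [SimpleGraph.mem_edgeFinset, SimpleGraph.mem_edgeSet] at h3
        exact ⟨h3, h2⟩
      · rintro ⟨h1, h2⟩
        rw [hG', SimpleGraph.deleteEdges_adj] at h1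
        exact ⟨h1.1, h2⟩
    have hkz : ∀ k z : V, k ≠ ℓ → k ≠ p → s(k, z) ≠ e := by
      intro k z h1 h2 hc
      rw [hedef, Sym2.eq_iff] at hc
      rcases hc with ⟨h3, _⟩ | ⟨h3, _⟩
      · exact h1 h3
      · exact h2 h3
    have h12b : ∀ (F' : Finset (Sym2 V)) (k : V), k ≠ ℓ → k ≠ p →
        nbrsIn G (insert e F') k = nbrsIn G F' k := by
      intro F' k h1 h2
      unfold nbrsIn
      refine Finset.filter_congr fun z hz => ?_
      simp only [Finset.mem_insert]
      exact or_iff_right (hkz k z h1 h2)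
    have h12c : ∀ F' : Finset (Sym2 V), nbrsIn G (insert e F') ℓ = {p} := by
      intro F'
      unfold nbrsIn
      rw [hlp, Finset.filter_singleton, if_pos]
      exact Finset.mem_insert_self _ _
    have h12d : ∀ F' : Finset (Sym2 V), F' ⊆ G'.edgeFinset → nbrsIn G F' ℓ = ∅ := by
      intro F' hF'
      unfold nbrsIn
      rw [hlp, Finset.filter_singleton, if_neg]
      intro hc
      exact heE' (hF' hc)
    have h12e : ∀ F' : Finset (Sym2 V),
        nbrsIn G (insert e F') p = insert ℓ (nbrsIn G F' p) := by
      intro F'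
      unfold nbrsIn
      ext z
      simp only [Finset.mem_filter, Finset.mem_insert, SimpleGraph.mem_neighborFinset]
      constructor
      · rintro ⟨h1, h2 | h2⟩
        · left
          rw [hedef, Sym2.eq_iff] at h2
          rcases h2 with ⟨h3, _⟩ | ⟨_, h4⟩
          · exact absurd h3 hpℓ
          · exact h4
        · exact Or.inr ⟨h1, h2⟩
      · rintro (rfl | ⟨h1, h2⟩)
        · exact ⟨hadj.symm, Or.inl (by rw [hedef, Sym2.eq_swap])⟩
        · exact ⟨h1, Or.inr h2⟩
    -- weight factorizations
    set R : Finset (Sym2 V) → ℝ :=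
      fun F => ∏ k ∈ (Finset.univ.erase ℓ).erase p, μ k (nbrsIn G' F k) with hR
    have hpmem : p ∈ Finset.univ.erase ℓ := Finset.mem_erase.mpr ⟨hpℓ, Finset.mem_univ p⟩
    have hw1 : ∀ F' ⊆ G'.edgeFinset,
        gWeight G μ F' = μ ℓ ∅ * (μ p (nbrsIn G' F' p) * R F') := by
      intro F' hF'
      rw [gWeight, ← Finset.mul_prod_erase Finset.univ _ (Finset.mem_univ ℓ),
        ← Finset.mul_prod_erase _ _ hpmem]
      rw [h12d F' hF', h12a F' hF' p]
      congr 1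
      congr 1
      exact Finset.prod_congr rfl fun k hk => by rw [h12a F' hF' k]
    have hw2 : ∀ F' ⊆ G'.edgeFinset,
        gWeight G μ (insert e F') = μ ℓ {p} * (μ p (insert ℓ (nbrsIn G' F' p)) * R F') := by
      intro F' hF'
      rw [gWeight, ← Finset.mul_prod_erase Finset.univ _ (Finset.mem_univ ℓ),
        ← Finset.mul_prod_erase _ _ hpmem]
      rw [h12c F', h12e F', h12a F' hF' p]
      congr 1
      congr 1
      refine Finset.prod_congr rfl fun k hk => ?_
      have hk1 : k ≠ p := (Finset.mem_erase.mp hk).1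
      have hk2 : k ≠ ℓ := (Finset.mem_erase.mp (Finset.mem_of_mem_erase hk)).1
      rw [h12b F' k hk2 hk1, h12a F' hF' k]
    have hw3 : ∀ F' ⊆ G'.edgeFinset,
        gWeight G' μ' F' = μ' p (nbrsIn G' F' p) * R F' := by
      intro F' hF'
      rw [gWeight, ← Finset.mul_prod_erase Finset.univ _ (Finset.mem_univ ℓ),
        ← Finset.mul_prod_erase _ _ hpmem]
      rw [hμ'ℓ, one_mul]
      congr 1
      refine Finset.prod_congr rfl fun k hk => ?_
      have hk1 : k ≠ p := (Finset.mem_erase.mp hk).1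
      have hk2 : k ≠ ℓ := (Finset.mem_erase.mp (Finset.mem_of_mem_erase hk)).1
      rw [hμ'k k hk2 hk1]
    have hkey : ∀ F' ⊆ G'.edgeFinset,
        gWeight G μ F' * t ^ F'.card + gWeight G μ (insert e F') * t ^ (insert e F').card
          = gWeight G' μ' F' * t ^ F'.card := by
      intro F' hF'
      have heF' : e ∉ F' := fun h => heE' (hF' h)
      rw [Finset.card_insert_of_notMem heF', hw1 F' hF', hw2 F' hF', hw3 F' hF', hμ'p]
      ring
    have hsplit : ∀ f : Finset (Sym2 V) → ℝ,
        ∑ F ∈ G.edgeFinset.powerset, f F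
          = ∑ F ∈ G'.edgeFinset.powerset, f F
            + ∑ F ∈ G'.edgeFinset.powerset, f (insert e F) := by
      intro f
      rw [hEins]
      exact Finset.sum_powerset_insert heE' f
    by_cases hip : i = p
    case neg =>
      -- easy case : i is distinct from ℓ and p
      have hiℓ : i ≠ ℓ := fun h => hℓi h.symm
      obtain ⟨c, hc, hIH⟩ := IH G' μ' hac' hnn' h0' x hcav i hcard'
      refine ⟨c, hc, ?_⟩
      intro I hI
      have hIi : G'.neighborFinset i = G.neighborFinset i := hNk' i hiℓ hip
      have hI' : I ∈ (G'.neighborFinset i).powerset := by rwa [hIi]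
      have hptw : ∀ F ∈ G'.edgeFinset.powerset,
          (if nbrsIn G F i = I then gWeight G μ F * t ^ F.card else 0)
            + (if nbrsIn G (insert e F) i = I then
                gWeight G μ (insert e F) * t ^ (insert e F).card else 0)
          = (if nbrsIn G' F i = I then gWeight G' μ' F * t ^ F.card else 0) := by
        intro F hF
        rw [Finset.mem_powerset] at hF
        rw [h12b F i hiℓ hip, h12a F hF i]
        by_cases hq : nbrsIn G' F i = I
        · rw [if_pos hq, if_pos hq, if_pos hq]
          exact hkey F hF
        · rw [if_neg hq, if_neg hq, if_neg hq, add_zero]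
      rw [Finset.sum_filter, hsplit, ← Finset.sum_add_distrib,
        Finset.sum_congr rfl hptw, ← Finset.sum_filter]
      rw [hIH I hI']
      rw [hμ'k i hiℓ hip]
    case pos =>
      -- the hard case : i = p
      rw [hip] at *
      clear hip
      obtain ⟨c, hc, hIH⟩ := IH G' μ' hac' hnn' h0' x hcav p hcard'
      refine ⟨μ ℓ ∅ * c, mul_pos h0ℓ hc, ?_⟩
      intro I hI
      rw [Finset.mem_powerset] at hI
      have hnotℓ : ∀ F : Finset (Sym2 V), ℓ ∉ nbrsIn G' F p := by
        intro F hmem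
        have : ℓ ∈ G'.neighborFinset p := Finset.mem_of_mem_filter ℓ hmem
        rw [hNp'] at this
        exact Finset.notMem_erase _ _ this
      by_cases hℓI : ℓ ∈ I
      case neg =>
        -- ℓ ∉ I
        have hI' : I ∈ (G'.neighborFinset p).powerset := by
          rw [Finset.mem_powerset, hNp']
          exact Finset.subset_erase.mpr ⟨hI, hℓI⟩
        have hNum : (∑ F ∈ G.edgeFinset.powerset.filter (fun F => nbrsIn G F p = I),
            gWeight G μ F * t ^ F.card)
            = μ ℓ ∅ * (μ p I *
              ∑ F ∈ G'.edgeFinset.powerset,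
                (if nbrsIn G' F p = I then R F * t ^ F.card else 0)) := by
          rw [Finset.sum_filter, hsplit, ← Finset.sum_add_distrib, Finset.mul_sum,
            Finset.mul_sum]
          refine Finset.sum_congr rfl fun F hF => ?_
          rw [Finset.mem_powerset] at hF
          rw [h12a F hF p, h12e F, h12a F hF p]
          have h2 : ¬ (insert ℓ (nbrsIn G' F p) = I) :=
            fun h => hℓI (h ▸ Finset.mem_insert_self ℓ _)
          rw [if_neg h2, add_zero]
          by_cases hq : nbrsIn G' F p = I
          · rw [if_pos hq, if_pos hq, hw1 F hF, hq]
            ring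
          · rw [if_neg hq, if_neg hq, mul_zero, mul_zero]
        have hNum' : (∑ F ∈ G'.edgeFinset.powerset.filter (fun F => nbrsIn G' F p = I),
            gWeight G' μ' F * t ^ F.card)
            = μ' p I * ∑ F ∈ G'.edgeFinset.powerset,
                (if nbrsIn G' F p = I then R F * t ^ F.card else 0) := by
          rw [Finset.sum_filter, Finset.mul_sum]
          refine Finset.sum_congr rfl fun F hF => ?_
          rw [Finset.mem_powerset] at hF
          by_cases hq : nbrsIn G' F p = I
          · rw [if_pos hq, if_pos hq, hw3 F hF, hq]
            ring
          · rw [if_neg hq, if_neg hq, mul_zero]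
        rw [hNum]
        have hmain : μ p I *
            (∑ F ∈ G'.edgeFinset.powerset, (if nbrsIn G' F p = I then R F * t ^ F.card else 0))
            = c * (μ p I * ∏ j ∈ I, x j p) := by
          by_cases hμz : μ p I = 0
          · simp [hμz]
          · have hμpos : 0 < μ p I := lt_of_le_of_ne (hnn p I (Finset.mem_powerset.mpr hI))
              (Ne.symm hμz)
            have hμ'pos : 0 < μ' p I := by
              rw [hμ'p]
              have h2 : 0 ≤ μ p (insert ℓ I) := by
                refine hnn p _ (Finset.mem_powerset.mpr (Finset.insert_subset hlmem hI))
              nlinarith [mul_pos h0ℓ hμpos, mul_nonneg (mul_nonneg ht.le hμℓp) h2]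
            have hcan : μ' p I *
                (∑ F ∈ G'.edgeFinset.powerset,
                  (if nbrsIn G' F p = I then R F * t ^ F.card else 0))
                = μ' p I * (c * ∏ j ∈ I, x j p) := by
              rw [← hNum', hIH I hI']
              ring
            have := mul_left_cancel₀ (ne_of_gt hμ'pos) hcan
            rw [this]
            ring
        rw [hmain]
        ring
      case pos =>
        -- ℓ ∈ I
        set I₀ := I.erase ℓ with hI₀def
        have hins : insert ℓ I₀ = I := Finset.insert_erase hℓI
        have hI₀ : I₀ ∈ (G'.neighborFinset p).powerset := by
          rw [Finset.mem_powerset, hNp']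
          exact Finset.erase_subset_erase ℓ hI
        have hℓI₀ : ℓ ∉ I₀ := Finset.notMem_erase _ _
        have hNum : (∑ F ∈ G.edgeFinset.powerset.filter (fun F => nbrsIn G F p = I),
            gWeight G μ F * t ^ F.card)
            = t * μ ℓ {p} * (μ p I *
              ∑ F ∈ G'.edgeFinset.powerset,
                (if nbrsIn G' F p = I₀ then R F * t ^ F.card else 0)) := by
          rw [Finset.sum_filter, hsplit, ← Finset.sum_add_distrib, Finset.mul_sum,
            Finset.mul_sum]
          refine Finset.sum_congr rfl fun F hF => ?_
          rw [Finset.mem_powerset] at hF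
          rw [h12a F hF p, h12e F, h12a F hF p]
          have h1 : ¬ (nbrsIn G' F p = I) := by
            intro h
            exact hnotℓ F (h.symm ▸ hℓI)
          rw [if_neg h1, zero_add]
          have h2 : (insert ℓ (nbrsIn G' F p) = I) ↔ (nbrsIn G' F p = I₀) := by
            constructor
            · intro h
              rw [hI₀def, ← h, Finset.erase_insert (hnotℓ F)]
            · intro h
              rw [h, hins]
          by_cases hq : nbrsIn G' F p = I₀
          · rw [if_pos (h2.mpr hq), if_pos hq, hw2 F hF, hq, hins]
            have hcard2 : (insert e F).card = F.card + 1 :=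
              Finset.card_insert_of_notMem (fun h => heE' (hF h))
            rw [hcard2]
            ring
          · rw [if_neg (fun h => hq (h2.mp h)), if_neg hq, mul_zero, mul_zero]
        have hNum' : (∑ F ∈ G'.edgeFinset.powerset.filter (fun F => nbrsIn G' F p = I₀),
            gWeight G' μ' F * t ^ F.card)
            = μ' p I₀ * ∑ F ∈ G'.edgeFinset.powerset,
                (if nbrsIn G' F p = I₀ then R F * t ^ F.card else 0) := by
          rw [Finset.sum_filter, Finset.mul_sum]
          refine Finset.sum_congr rfl fun F hF => ?_
          rw [Finset.mem_powerset] at hF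
          by_cases hq : nbrsIn G' F p = I₀
          · rw [if_pos hq, if_pos hq, hw3 F hF, hq]
            ring
          · rw [if_neg hq, if_neg hq, mul_zero]
        rw [hNum]
        have hprodI : (∏ j ∈ I, x j p) = x ℓ p * ∏ j ∈ I₀, x j p := by
          rw [← hins, Finset.prod_insert hℓI₀]
        rw [hprodI]
        have hmain : μ ℓ {p} * (μ p I *
            (∑ F ∈ G'.edgeFinset.powerset,
              (if nbrsIn G' F p = I₀ then R F * t ^ F.card else 0)))
            = μ ℓ {p} * (μ p I * (c * ∏ j ∈ I₀, x j p)) := by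
          by_cases hμz : μ ℓ {p} * μ p I = 0
          · rcases mul_eq_zero.mp hμz with h | h
            · rw [h]; ring
            · rw [h]; ring
          · have h1 : 0 < μ ℓ {p} :=
              lt_of_le_of_ne hμℓp (fun h => hμz (by rw [← h]; ring))
            have h2 : 0 < μ p I := by
              have := hnn p I (Finset.mem_powerset.mpr hI)
              rcases lt_or_eq_of_le this with h | h
              · exact h
              · exact absurd (by rw [← h]; ring) hμz
            have hμ'pos : 0 < μ' p I₀ := by
              rw [hμ'p]
              have h3 : μ p (insert ℓ I₀) = μ p I := by rw [hins]
              have h4 : 0 ≤ μ p I₀ :=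
                hnn p I₀ (Finset.mem_powerset.mpr ((Finset.erase_subset _ _).trans hI))
              nlinarith [mul_pos (mul_pos ht h1) h2, mul_nonneg h0ℓ.le h4]
            have hcan : μ' p I₀ *
                (∑ F ∈ G'.edgeFinset.powerset,
                  (if nbrsIn G' F p = I₀ then R F * t ^ F.card else 0))
                = μ' p I₀ * (c * ∏ j ∈ I₀, x j p) := by
              rw [← hNum', hIH I₀ hI₀]
              ring
            have := mul_left_cancel₀ (ne_of_gt hμ'pos) hcan
            rw [this]
        -- final algebra : t * μℓ{p} * (μpI * S₀) = μℓ∅*c * (μpI * (xℓp * ∏₀))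
        have hfin : μ ℓ ∅ * c * (μ p I * (x ℓ p * ∏ j ∈ I₀, x j p))
            = t * μ ℓ {p} * (μ p I * (c * ∏ j ∈ I₀, x j p)) := by
          linear_combination (c * μ p I * ∏ j ∈ I₀, x j p) * hxℓp
        rw [hfin]
        linear_combination t * hmain

end Main
/-- on a finite acyclic network, the Gibbs--Boltzmann marginal of
`𝓕 ∩ E_i` is obtained from `μ_i` by imposing the external field `(x_{j→i}(t))_{j∈∂i}`,
where `x(t)` solves the cavity equation. -/
theorem stmt7 {V : Type*} [Fintype V] [DecidableEq V] (G : SimpleGraph V)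
    [DecidableRel G.Adj] (hac : G.IsAcyclic) (μ : V → Finset V → ℝ)
    (hnn : ∀ i : V, ∀ S ∈ (G.neighborFinset i).powerset, 0 ≤ μ i S)
    (h0 : ∀ i : V, 0 < μ i ∅) (t : ℝ) (ht : 0 < t)
    (x : V → V → ℝ) (hxnn : ∀ i j, 0 ≤ x i j)
    (hx : ∀ i j, G.Adj i j → x i j = t * cavOp G μ x i j)
    (i : V) (I : Finset V) (hI : I ⊆ G.neighborFinset i) :
    gProb G μ t (fun F => nbrsIn G F i = I) =
      μ i I * (∏ j ∈ I, x j i) /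
        ∑ J ∈ (G.neighborFinset i).powerset, μ i J * ∏ j ∈ J, x j i := by
  obtain ⟨c, hc, hkey⟩ :=
    aux_main ht G.edgeFinset.card G μ hac hnn h0 x hx i le_rfl
  have hmaps : ∀ F ∈ G.edgeFinset.powerset,
      nbrsIn G F i ∈ (G.neighborFinset i).powerset := by
    intro F hF
    rw [Finset.mem_powerset]
    exact Finset.filter_subset _ _
  have hZ : ZG G μ t
      = c * ∑ J ∈ (G.neighborFinset i).powerset, μ i J * ∏ j ∈ J, x j i := by
    rw [ZG, ← Finset.sum_fiberwise_of_maps_to hmaps (fun F => gWeight G μ F * t ^ F.card),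
      Finset.mul_sum]
    refine Finset.sum_congr rfl fun J hJ => ?_
    rw [hkey J hJ]
  have h := hkey I (Finset.mem_powerset.mpr hI)
  rw [gProb, hZ]
  refine Eq.trans ?_ (mul_div_mul_left (μ i I * ∏ j ∈ I, x j i)
    (∑ J ∈ (G.neighborFinset i).powerset, μ i J * ∏ j ∈ J, x j i) (ne_of_gt hc))
  congr 1
  convert h using 2
  congr!
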